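/- For every natural number n, the ordered Bell number w_n = ∑_{k=0}^{n} k! * S(n,k) equals the sum of the convergent series ∑_{k=0}^{∞} k^n / 2^{k+1}. -/

import Mathlib

open Finset

def stirling2 : ℕ → ℕ → ℕ
  | 0, 0 => 1
  | 0, _ + 1 => 0
  | _ + 1, 0 => 0
  | n + 1, k + 1 => (k + 1) * stirling2 n (k + 1) + stirling2 n k

def ob (n : ℕ) : ℕ := ∑ k ∈ range (n + 1), k.factorial * stirling2 n k

lemma stirling2_eq_zero : ∀ n k : ℕ, n < k → stirling2 n k = 0
  | 0, _ + 1, _ => rfl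
  | n + 1, k + 1, h => by
    simp [stirling2, stirling2_eq_zero n (k + 1) (by omega), stirling2_eq_zero n k (by omega)]

lemma mul_descFactorial (k j : ℕ) :
    k * k.descFactorial j = k.descFactorial (j + 1) + j * k.descFactorial j := by
  rcases le_or_gt j k with h | h
  · rw [Nat.descFactorial_succ, ← Nat.add_mul, Nat.sub_add_cancel h]
  · rw [Nat.descFactorial_eq_zero_iff_lt.mpr h, Nat.descFactorial_eq_zero_iff_lt.mpr (by omega)]
    ring

lemma pow_eq_sum_stirling (n k : ℕ) :
    k ^ n = ∑ j ∈ range (n + 1), stirling2 n j * k.descFactorial j := by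
  induction n with
  | zero => simp [stirling2]
  | succ n ih =>
    have : k ^ (n + 1) = ∑ j ∈ range (n + 1),
        stirling2 n j * (k.descFactorial (j + 1) + j * k.descFactorial j) := by
      rw [pow_succ, mul_comm, ih, Finset.mul_sum]
      exact Finset.sum_congr rfl fun j _ => by rw [← mul_descFactorial]; ring
    rw [this]
    simp only [Nat.mul_add]
    rw [Finset.sum_add_distrib]
    have h1 : ∑ j ∈ range (n + 1), stirling2 n j * k.descFactorial (j + 1) =
        ∑ j ∈ range (n + 2), (if j = 0 then 0 else stirling2 n (j - 1) * k.descFactorial j) := by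
      rw [Finset.sum_range_succ' (fun j => if j = 0 then 0 else stirling2 n (j - 1) * k.descFactorial j)]
      simp
    have h2 : ∑ j ∈ range (n + 1), stirling2 n j * (j * k.descFactorial j) =
        ∑ j ∈ range (n + 2), stirling2 n j * (j * k.descFactorial j) := by
      rw [Finset.sum_range_succ (fun j => stirling2 n j * (j * k.descFactorial j)) (n + 1),
        stirling2_eq_zero n (n + 1) n.lt_succ_self]
      simp
    rw [h1, h2, ← Finset.sum_add_distrib]
    refine Finset.sum_congr rfl fun j hj => ?_
    rcases j with _ | j
    · simp [stirling2]
    · simp only [Nat.succ_ne_zero, if_false, Nat.succ_sub_one]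
      show stirling2 n j * k.descFactorial (j + 1) +
        stirling2 n (j + 1) * ((j + 1) * k.descFactorial (j + 1)) = _
      rw [show stirling2 (n + 1) (j + 1) = (j + 1) * stirling2 n (j + 1) + stirling2 n j from rfl]
      ring

lemma hasSum_choose_half (j : ℕ) :
    HasSum (fun k : ℕ => (k.choose j : ℝ) / 2 ^ (k + 1)) 1 := by
  have hr : ‖(1 / 2 : ℝ)‖ < 1 := by rw [Real.norm_eq_abs, abs_lt]; constructor <;> norm_num
  have h := (hasSum_choose_mul_geometric_of_norm_lt_one j hr).mul_right ((1 / 2 : ℝ) ^ (j + 1))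
  have hsum : (1 / (1 - 1 / 2 : ℝ) ^ (j + 1)) * (1 / 2) ^ (j + 1) = 1 := by
    norm_num
  rw [hsum] at h
  have heq : (fun n : ℕ => ((n + j).choose j : ℝ) * (1 / 2) ^ n * (1 / 2) ^ (j + 1)) =
      fun n : ℕ => ((n + j).choose j : ℝ) / 2 ^ ((n + j) + 1) := by
    funext n
    rw [div_pow, div_pow, one_pow, one_pow, mul_assoc, div_mul_div_comm, one_mul, ← pow_add,
      mul_one_div, ← add_assoc]
  rw [heq] at h
  have := (hasSum_nat_add_iff (f := fun k : ℕ => (k.choose j : ℝ) / 2 ^ (k + 1)) j).mp h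
  have hz : ∑ i ∈ range j, ((i.choose j : ℝ) / 2 ^ (i + 1)) = 0 := by
    refine Finset.sum_eq_zero fun i hi => ?_
    rw [Nat.choose_eq_zero_of_lt (Finset.mem_range.mp hi)]
    simp
  rwa [hz, add_zero] at this

lemma hasSum_descFactorial_half (j : ℕ) :
    HasSum (fun k : ℕ => (k.descFactorial j : ℝ) / 2 ^ (k + 1)) (j.factorial : ℝ) := by
  have h := (hasSum_choose_half j).mul_left (j.factorial : ℝ)
  rw [mul_one] at h
  convert h using 2 with k
  · rfl
  rw [Nat.descFactorial_eq_factorial_mul_choose]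
  push_cast
  ring

theorem stmt18 (n : ℕ) :
    Summable (fun k : ℕ => (k : ℝ) ^ n / 2 ^ (k + 1)) ∧
      (ob n : ℝ) = ∑' k : ℕ, (k : ℝ) ^ n / 2 ^ (k + 1) := by
  have h : HasSum (fun k : ℕ => (k : ℝ) ^ n / 2 ^ (k + 1))
      (∑ j ∈ range (n + 1), (stirling2 n j : ℝ) * (j.factorial : ℝ)) := by
    have h1 : HasSum (fun k : ℕ => ∑ j ∈ range (n + 1),
        (stirling2 n j : ℝ) * ((k.descFactorial j : ℝ) / 2 ^ (k + 1)))
        (∑ j ∈ range (n + 1), (stirling2 n j : ℝ) * (j.factorial : ℝ)) :=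
      hasSum_sum fun j _ => (hasSum_descFactorial_half j).mul_left _
    convert h1 using 2 with k
    simp only [← mul_div_assoc, ← Finset.sum_div]
    congr 1
    exact_mod_cast pow_eq_sum_stirling n k
  refine ⟨h.summable, ?_⟩
  rw [h.tsum_eq, ob]
  push_cast
  exact Finset.sum_congr rfl fun j _ => mul_comm _ _
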